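/- The function ψ : (0, ∞) → ℝ is strictly increasing, satisfies 0 < ψ(γ) < 1 for every γ > 0, and has limits lim_{γ→0⁺} ψ(γ) = 0 and lim_{γ→∞} ψ(γ) = 1. -/

import Mathlib

open Real Filter MeasureTheory

/-- ψ(γ) = E[tanh(L/2)] for L ~ N(γ, 2γ). -/
noncomputable def psi (γ : ℝ) : ℝ :=
  ∫ x : ℝ, Real.tanh (x / 2) * (1 / Real.sqrt (4 * Real.pi * γ)) *
    Real.exp (-(x - γ) ^ 2 / (4 * γ))


lemma myTanh_hasDerivAt (x : ℝ) : HasDerivAt Real.tanh (1 / Real.cosh x ^ 2) x := by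
  have h : HasDerivAt (fun y => Real.sinh y / Real.cosh y)
      ((Real.cosh x * Real.cosh x - Real.sinh x * Real.sinh x) / Real.cosh x ^ 2) x :=
    (Real.hasDerivAt_sinh x).div (Real.hasDerivAt_cosh x) (Real.cosh_pos x).ne'
  have h2 : (fun y => Real.sinh y / Real.cosh y) = Real.tanh :=
    funext fun y => (Real.tanh_eq_sinh_div_cosh y).symm
  have h3 : Real.cosh x * Real.cosh x - Real.sinh x * Real.sinh x = 1 := by
    have := Real.cosh_sq_sub_sinh_sq x; nlinarith
  rw [h2, h3] at h; exact h

lemma myTanh_cont : Continuous Real.tanh := by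
  have h2 : (fun y => Real.sinh y / Real.cosh y) = Real.tanh :=
    funext fun y => (Real.tanh_eq_sinh_div_cosh y).symm
  rw [← h2]
  exact Real.continuous_sinh.div Real.continuous_cosh fun x => (Real.cosh_pos x).ne'

lemma myTanh_lt_one (x : ℝ) : Real.tanh x < 1 := by
  rw [Real.tanh_eq_sinh_div_cosh]
  exact (div_lt_one (Real.cosh_pos x)).mpr (Real.sinh_lt_cosh x)

lemma neg_one_lt_myTanh (x : ℝ) : -1 < Real.tanh x := by
  have := myTanh_lt_one (-x); rw [Real.tanh_neg] at this; linarith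

lemma myTanh_abs_le_one (x : ℝ) : |Real.tanh x| ≤ 1 :=
  abs_le.mpr ⟨(neg_one_lt_myTanh x).le, (myTanh_lt_one x).le⟩

lemma myTanh_strictMono : StrictMono Real.tanh :=
  strictMono_of_deriv_pos fun x => by
    rw [(myTanh_hasDerivAt x).deriv]; positivity

lemma myTanh_sub_le {a b : ℝ} (h : b ≤ a) : Real.tanh a - Real.tanh b ≤ a - b := by
  have mono : Monotone (fun x => x - Real.tanh x) := by
    apply monotone_of_deriv_nonneg
    · exact differentiable_id.sub fun x => (myTanh_hasDerivAt x).differentiableAt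
    · intro x
      have hd : HasDerivAt (fun x : ℝ => x - Real.tanh x) (1 - 1 / Real.cosh x ^ 2) x := by
        exact (hasDerivAt_id' x).sub (myTanh_hasDerivAt x)
      rw [hd.deriv]
      have h1 : 1 ≤ Real.cosh x ^ 2 := by nlinarith [Real.one_le_cosh x]
      have : 1 / Real.cosh x ^ 2 ≤ 1 := by
        rw [div_le_one (by positivity)]; exact h1
      linarith
  have := mono h
  simp only at this; linarith

lemma one_sub_myTanh_le (x : ℝ) : 1 - Real.tanh x ≤ Real.exp (-x) := by
  rw [Real.tanh_eq_sinh_div_cosh]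
  have hc := Real.cosh_pos x
  have h1 : 1 - Real.sinh x / Real.cosh x = Real.exp (-x) / Real.cosh x := by
    rw [eq_div_iff hc.ne', sub_mul, div_mul_cancel₀ _ hc.ne', one_mul, ← Real.cosh_sub_sinh]
  rw [h1]
  calc Real.exp (-x) / Real.cosh x ≤ Real.exp (-x) / 1 :=
        div_le_div_of_nonneg_left (Real.exp_pos _).le one_pos (Real.one_le_cosh x)
      _ = Real.exp (-x) := div_one _

noncomputable def stdg (z : ℝ) : ℝ := (Real.sqrt (2 * Real.pi))⁻¹ * Real.exp (-z ^ 2 / 2)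

lemma stdg_pos (z : ℝ) : 0 < stdg z := by
  unfold stdg; positivity

lemma stdg_nonneg (z : ℝ) : 0 ≤ stdg z := (stdg_pos z).le

lemma continuous_stdg : Continuous stdg := by
  unfold stdg
  exact continuous_const.mul ((continuous_pow 2).neg.div_const 2).rexp

lemma stdg_neg (z : ℝ) : stdg (-z) = stdg z := by simp [stdg]

lemma exp_mul_stdg_eq (t z : ℝ) :
    Real.exp (t * z) * stdg z
      = Real.exp (t ^ 2 / 2) * ((Real.sqrt (2 * Real.pi))⁻¹ * Real.exp (-(1/2) * (z - t) ^ 2)) := by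
  unfold stdg
  rw [show Real.exp (t*z) * ((Real.sqrt (2 * Real.pi))⁻¹ * Real.exp (-z^2/2))
      = (Real.sqrt (2 * Real.pi))⁻¹ * (Real.exp (t*z) * Real.exp (-z^2/2)) by ring,
    ← Real.exp_add,
    show t*z + -z^2/2 = t^2/2 + -(1/2)*(z-t)^2 by ring, Real.exp_add]
  ring

lemma integrable_exp_mul_stdg (t : ℝ) : Integrable (fun z => Real.exp (t * z) * stdg z) := by
  simp only [exp_mul_stdg_eq t]
  exact (((integrable_exp_neg_mul_sq (by norm_num : (0:ℝ) < 1/2)).comp_sub_right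
    t).const_mul _).const_mul _

lemma integral_exp_mul_stdg (t : ℝ) :
    ∫ z : ℝ, Real.exp (t * z) * stdg z = Real.exp (t ^ 2 / 2) := by
  simp only [exp_mul_stdg_eq t]
  rw [integral_const_mul, integral_const_mul,
    integral_sub_right_eq_self (fun x => Real.exp (-(1/2) * x ^ 2)) t,
    integral_gaussian]
  rw [show Real.pi / (1/2) = 2 * Real.pi by ring,
    inv_mul_cancel₀ (Real.sqrt_ne_zero'.mpr (by positivity)), mul_one]

lemma integrable_stdg : Integrable stdg := by
  have := integrable_exp_mul_stdg 0
  simpa using this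

lemma integral_stdg : ∫ z : ℝ, stdg z = 1 := by
  have := integral_exp_mul_stdg 0
  simpa using this

lemma integrable_bdd_stdg {g : ℝ → ℝ} (hg : Continuous g) {C : ℝ} (hC : ∀ z, |g z| ≤ C) :
    Integrable (fun z => g z * stdg z) := by
  apply Integrable.mono' (integrable_stdg.const_mul C)
    ((hg.mul continuous_stdg).aestronglyMeasurable)
  filter_upwards with z
  rw [Real.norm_eq_abs, Pi.mul_apply, abs_mul, abs_of_nonneg (stdg_nonneg z)]
  exact mul_le_mul_of_nonneg_right (hC z) (stdg_nonneg z)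

lemma integrable_abs_mul_stdg : Integrable (fun z => |z| * stdg z) := by
  apply Integrable.mono'
    ((integrable_exp_mul_stdg 1).add (integrable_exp_mul_stdg (-1)))
    ((continuous_abs.mul continuous_stdg).aestronglyMeasurable)
  filter_upwards with z
  rw [Real.norm_eq_abs, Pi.mul_apply, abs_mul, abs_abs, abs_of_nonneg (stdg_nonneg z)]
  have h1 : |z| ≤ Real.exp (1 * z) + Real.exp (-1 * z) := by
    rcases abs_cases z with ⟨h, _⟩ | ⟨h, _⟩
    · rw [h]; nlinarith [Real.add_one_le_exp (1*z), Real.exp_pos (-1*z)]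
    · rw [h]; nlinarith [Real.add_one_le_exp (-1*z), Real.exp_pos (1*z)]
  calc |z| * stdg z ≤ (Real.exp (1*z) + Real.exp (-1*z)) * stdg z :=
        mul_le_mul_of_nonneg_right h1 (stdg_nonneg z)
    _ = (fun z => Real.exp (1*z) * stdg z + Real.exp (-1*z) * stdg z) z := by ring

lemma integral_stdg_pos {g : ℝ → ℝ} (hg : Continuous g) (hpos : ∀ z, 0 < g z)
    (hint : Integrable (fun z => g z * stdg z)) : 0 < ∫ z : ℝ, g z * stdg z := by
  rw [integral_pos_iff_support_of_nonneg_ae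
    (ae_of_all _ fun z => (mul_pos (hpos z) (stdg_pos z)).le) hint]
  have : Function.support (fun z => g z * stdg z) = Set.univ :=
    Set.eq_univ_of_forall fun z => (mul_pos (hpos z) (stdg_pos z)).ne'
  rw [this]
  simp



lemma psi_eq {γ : ℝ} (hγ : 0 < γ) :
    psi γ = ∫ z : ℝ, Real.tanh ((γ + Real.sqrt (2*γ) * z) / 2) * stdg z := by
  have h2γ : (0:ℝ) < 2 * γ := by linarith
  have hs : (0:ℝ) < Real.sqrt (2*γ) := Real.sqrt_pos.mpr h2γ
  set s := Real.sqrt (2*γ) with hs_def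
  have hs2 : s ^ 2 = 2*γ := Real.sq_sqrt h2γ.le
  unfold psi
  have h1 : ∫ x : ℝ, Real.tanh (x / 2) * (1 / Real.sqrt (4 * Real.pi * γ)) *
        Real.exp (-(x - γ) ^ 2 / (4 * γ))
      = ∫ u : ℝ, Real.tanh ((u + γ) / 2) * (1 / Real.sqrt (4 * Real.pi * γ)) *
        Real.exp (-u ^ 2 / (4 * γ)) := by
    rw [← integral_add_right_eq_self (fun x => Real.tanh (x / 2) *
      (1 / Real.sqrt (4 * Real.pi * γ)) * Real.exp (-(x - γ) ^ 2 / (4 * γ))) γ]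
    congr 1; funext u
    simp only [add_sub_cancel_right]
  rw [h1]
  have h2 := MeasureTheory.Measure.integral_comp_mul_left (fun u => Real.tanh ((u + γ) / 2) *
      (1 / Real.sqrt (4 * Real.pi * γ)) * Real.exp (-u ^ 2 / (4 * γ))) s
  have h3 : ∫ u : ℝ, Real.tanh ((u + γ) / 2) * (1 / Real.sqrt (4 * Real.pi * γ)) *
        Real.exp (-u ^ 2 / (4 * γ))
      = s * ∫ z : ℝ, Real.tanh ((s * z + γ) / 2) * (1 / Real.sqrt (4 * Real.pi * γ)) *
        Real.exp (-(s * z) ^ 2 / (4 * γ)) := by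
    rw [h2, abs_of_pos (inv_pos.mpr hs), smul_eq_mul, ← mul_assoc,
      mul_inv_cancel₀ hs.ne', one_mul]
  rw [h3, ← integral_const_mul]
  congr 1; funext z
  have hconst : s * (1 / Real.sqrt (4 * Real.pi * γ)) = (Real.sqrt (2 * Real.pi))⁻¹ := by
    rw [show 4 * Real.pi * γ = (2*Real.pi) * (2*γ) by ring,
      Real.sqrt_mul (by positivity)]
    have hπ : (0:ℝ) < Real.sqrt (2*Real.pi) := Real.sqrt_pos.mpr (by positivity)
    field_simp
    rw [hs_def, Real.sqrt_mul (by norm_num : (0:ℝ) ≤ 2) γ]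
  have hexp : -(s * z) ^ 2 / (4 * γ) = -z ^ 2 / 2 := by
    rw [mul_pow, hs2]; field_simp; ring
  rw [hexp, show s * z + γ = γ + s * z by ring]
  unfold stdg
  calc s * (Real.tanh ((γ + s*z)/2) * (1 / Real.sqrt (4 * Real.pi * γ)) * Real.exp (-z^2/2))
      = Real.tanh ((γ + s*z)/2) * ((s * (1 / Real.sqrt (4 * Real.pi * γ))) * Real.exp (-z^2/2)) := by
        ring
    _ = Real.tanh ((γ + s*z)/2) * ((Real.sqrt (2*Real.pi))⁻¹ * Real.exp (-z^2/2)) := by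
        rw [hconst]

lemma psi_bounds {γ : ℝ} (hγ : 0 < γ) : 0 < psi γ ∧ psi γ ≤ γ / 2 := by
  have h2γ : (0:ℝ) < 2 * γ := by linarith
  have hs : (0:ℝ) < Real.sqrt (2*γ) := Real.sqrt_pos.mpr h2γ
  set s := Real.sqrt (2*γ) with hs_def
  have cont1 : Continuous fun z : ℝ => Real.tanh ((γ + s*z)/2) := by
    apply myTanh_cont.comp; continuity
  have cont2 : Continuous fun z : ℝ => Real.tanh ((γ - s*z)/2) := by
    apply myTanh_cont.comp; continuity
  have int1 : Integrable (fun z => Real.tanh ((γ + s*z)/2) * stdg z) :=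
    integrable_bdd_stdg cont1 (fun z => myTanh_abs_le_one _)
  have int2 : Integrable (fun z => Real.tanh ((γ - s*z)/2) * stdg z) :=
    integrable_bdd_stdg cont2 (fun z => myTanh_abs_le_one _)
  have hrefl : ∫ z : ℝ, Real.tanh ((γ - s*z)/2) * stdg z
      = ∫ z : ℝ, Real.tanh ((γ + s*z)/2) * stdg z := by
    rw [← integral_neg_eq_self (fun z => Real.tanh ((γ + s*z)/2) * stdg z)]
    congr 1; funext z
    rw [mul_neg, ← sub_eq_add_neg, stdg_neg]
  have key : ∀ u : ℝ, 0 < Real.tanh ((γ+u)/2) + Real.tanh ((γ-u)/2) ∧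
      Real.tanh ((γ+u)/2) + Real.tanh ((γ-u)/2) ≤ γ := by
    intro u
    have hneg : Real.tanh ((γ-u)/2) = - Real.tanh ((u-γ)/2) := by
      rw [show (γ-u)/2 = -((u-γ)/2) by ring, Real.tanh_neg]
    constructor
    · rw [hneg]
      have := myTanh_strictMono (show (u-γ)/2 < (γ+u)/2 by linarith)
      linarith
    · rw [hneg]
      have := myTanh_sub_le (show (u-γ)/2 ≤ (γ+u)/2 by linarith)
      linarith
  have sum_int : Integrable
      (fun z => (Real.tanh ((γ+s*z)/2) + Real.tanh ((γ-s*z)/2)) * stdg z) :=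
    (int1.add int2).congr (ae_of_all _ fun z => by simp only [Pi.add_apply, Pi.sub_apply]; ring)
  have hdouble : 2 * psi γ
      = ∫ z : ℝ, (Real.tanh ((γ+s*z)/2) + Real.tanh ((γ-s*z)/2)) * stdg z := by
    rw [psi_eq hγ]
    calc 2 * ∫ z : ℝ, Real.tanh ((γ + s*z)/2) * stdg z
        = (∫ z : ℝ, Real.tanh ((γ + s*z)/2) * stdg z)
          + ∫ z : ℝ, Real.tanh ((γ - s*z)/2) * stdg z := by rw [hrefl]; ring
      _ = ∫ z : ℝ, (Real.tanh ((γ + s*z)/2) * stdg z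
          + Real.tanh ((γ - s*z)/2) * stdg z) := (integral_add int1 int2).symm
      _ = ∫ z : ℝ, (Real.tanh ((γ+s*z)/2) + Real.tanh ((γ-s*z)/2)) * stdg z := by
          congr 1; funext z; ring
  constructor
  · have hpos : 0 < ∫ z : ℝ,
        (Real.tanh ((γ+s*z)/2) + Real.tanh ((γ-s*z)/2)) * stdg z :=
      integral_stdg_pos (cont1.add cont2) (fun z => (key (s*z)).1) sum_int
    linarith [hdouble ▸ hpos]
  · have hle : (∫ z : ℝ, (Real.tanh ((γ+s*z)/2) + Real.tanh ((γ-s*z)/2)) * stdg z)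
        ≤ ∫ z : ℝ, γ * stdg z :=
      integral_mono sum_int (integrable_stdg.const_mul γ)
        (fun z => mul_le_mul_of_nonneg_right (key (s*z)).2 (stdg_nonneg z))
    rw [integral_const_mul, integral_stdg, mul_one] at hle
    linarith [hdouble]

lemma one_sub_psi_bounds {γ : ℝ} (hγ : 0 < γ) :
    0 < 1 - psi γ ∧ 1 - psi γ ≤ Real.exp (-γ/4) := by
  have h2γ : (0:ℝ) < 2 * γ := by linarith
  have hs : (0:ℝ) < Real.sqrt (2*γ) := Real.sqrt_pos.mpr h2γ
  set s := Real.sqrt (2*γ) with hs_def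
  have hs2 : s ^ 2 = 2*γ := Real.sq_sqrt h2γ.le
  have cont1 : Continuous fun z : ℝ => Real.tanh ((γ + s*z)/2) := by
    apply myTanh_cont.comp; continuity
  have int1 : Integrable (fun z => Real.tanh ((γ + s*z)/2) * stdg z) :=
    integrable_bdd_stdg cont1 (fun z => myTanh_abs_le_one _)
  have hint : Integrable (fun z => (1 - Real.tanh ((γ+s*z)/2)) * stdg z) :=
    (integrable_stdg.sub int1).congr (ae_of_all _ fun z => by simp only [Pi.add_apply, Pi.sub_apply]; ring)
  have hrw : 1 - psi γ = ∫ z : ℝ, (1 - Real.tanh ((γ+s*z)/2)) * stdg z := by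
    rw [psi_eq hγ]
    calc 1 - ∫ z : ℝ, Real.tanh ((γ + s*z)/2) * stdg z
        = (∫ z : ℝ, stdg z) - ∫ z : ℝ, Real.tanh ((γ + s*z)/2) * stdg z := by
          rw [integral_stdg]
      _ = ∫ z : ℝ, (stdg z - Real.tanh ((γ + s*z)/2) * stdg z) :=
          (integral_sub integrable_stdg int1).symm
      _ = ∫ z : ℝ, (1 - Real.tanh ((γ+s*z)/2)) * stdg z := by
          congr 1; funext z; ring
  constructor
  · rw [hrw]
    exact integral_stdg_pos (continuous_const.sub cont1)
      (fun z => by linarith [myTanh_lt_one ((γ+s*z)/2)]) hint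
  · rw [hrw]
    have hpt : ∀ z : ℝ, (1 - Real.tanh ((γ+s*z)/2)) * stdg z
        ≤ Real.exp (-γ/2) * (Real.exp ((-s/2) * z) * stdg z) := by
      intro z
      have h1 : 1 - Real.tanh ((γ+s*z)/2) ≤ Real.exp (-((γ+s*z)/2)) := one_sub_myTanh_le _
      have h2 : Real.exp (-((γ+s*z)/2)) = Real.exp (-γ/2) * Real.exp ((-s/2)*z) := by
        rw [← Real.exp_add]; congr 1; ring
      calc (1 - Real.tanh ((γ+s*z)/2)) * stdg z
          ≤ Real.exp (-((γ+s*z)/2)) * stdg z :=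
            mul_le_mul_of_nonneg_right h1 (stdg_nonneg z)
        _ = Real.exp (-γ/2) * (Real.exp ((-s/2)*z) * stdg z) := by rw [h2]; ring
    have hle : (∫ z : ℝ, (1 - Real.tanh ((γ+s*z)/2)) * stdg z)
        ≤ ∫ z : ℝ, Real.exp (-γ/2) * (Real.exp ((-s/2) * z) * stdg z) :=
      integral_mono hint ((integrable_exp_mul_stdg (-s/2)).const_mul _) hpt
    rw [integral_const_mul, integral_exp_mul_stdg] at hle
    have he : (-s/2) ^ 2 / 2 = γ/4 := by
      rw [show (-s/2) ^ 2 / 2 = s^2/8 by ring, hs2]; ring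
    rw [he, ← Real.exp_add, show -γ/2 + γ/4 = -γ/4 by ring] at hle
    exact hle

noncomputable def psiZ (γ : ℝ) : ℝ :=
  ∫ z : ℝ, Real.tanh ((γ + Real.sqrt (2*γ) * z) / 2) * stdg z

noncomputable def Dint (γ : ℝ) : ℝ :=
  ∫ z : ℝ, 1 / Real.cosh ((γ + Real.sqrt (2*γ) * z) / 2) ^ 2 *
    ((1 + 1 / Real.sqrt (2*γ) * z) / 2) * stdg z

lemma hasDerivAt_sqrt_two_mul {γ : ℝ} (h : 0 < γ) :
    HasDerivAt (fun x : ℝ => Real.sqrt (2*x)) (1 / Real.sqrt (2*γ)) γ := by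
  have h0 : (2:ℝ) * γ ≠ 0 := by positivity
  have h1 := (Real.hasDerivAt_sqrt h0).comp γ ((hasDerivAt_id γ).const_mul 2)
  have hs : (0:ℝ) < Real.sqrt (2*γ) := Real.sqrt_pos.mpr (by linarith)
  refine h1.congr_deriv ?_
  field_simp

lemma hasDerivAt_stdg (z : ℝ) : HasDerivAt stdg (-z * stdg z) z := by
  have hq : HasDerivAt (fun x : ℝ => -x^2/2) (-(2*z^1)/2) z :=
    ((hasDerivAt_pow 2 z).neg).div_const 2
  have hexp := (Real.hasDerivAt_exp (-z^2/2)).comp z hq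
  have h := hexp.const_mul (Real.sqrt (2 * Real.pi))⁻¹
  refine h.congr_deriv ?_
  simp only [stdg, pow_one]; ring

lemma psiZ_hasDerivAt {γ₀ : ℝ} (h : 0 < γ₀) : HasDerivAt psiZ (Dint γ₀) γ₀ := by
  have hs0 : (0:ℝ) < Real.sqrt γ₀ := Real.sqrt_pos.mpr h
  have key := hasDerivAt_integral_of_dominated_loc_of_deriv_le (μ := volume)
    (F := fun γ z => Real.tanh ((γ + Real.sqrt (2*γ) * z) / 2) * stdg z)
    (F' := fun γ z => 1 / Real.cosh ((γ + Real.sqrt (2*γ) * z) / 2) ^ 2 *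
      ((1 + 1 / Real.sqrt (2*γ) * z) / 2) * stdg z)
    (bound := fun z => (1 + |z| / Real.sqrt γ₀) * stdg z)
    (x₀ := γ₀) (s := Metric.ball γ₀ (γ₀/2)) (Metric.ball_mem_nhds _ (by positivity))
    ?_ ?_ ?_ ?_ ?_ ?_
  · exact key.2
  · filter_upwards with γ
    exact ((myTanh_cont.comp (by continuity)).mul continuous_stdg).aestronglyMeasurable
  · exact integrable_bdd_stdg (myTanh_cont.comp (by continuity))
      (fun z => myTanh_abs_le_one _)
  · have c1 : Continuous fun z : ℝ => 1 / Real.cosh ((γ₀ + Real.sqrt (2*γ₀) * z) / 2) ^ 2 :=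
      continuous_const.div ((Real.continuous_cosh.comp (by continuity)).pow 2)
        (fun z => by positivity)
    exact ((c1.mul (by continuity)).mul continuous_stdg).aestronglyMeasurable
  · filter_upwards with z
    intro γ hγ
    rw [Metric.mem_ball, Real.dist_eq] at hγ
    have hγ1 : γ₀/2 < γ := by cases abs_lt.mp hγ; linarith
    have hγpos : 0 < γ := by linarith
    have hsle : Real.sqrt γ₀ ≤ Real.sqrt (2*γ) := Real.sqrt_le_sqrt (by linarith)
    set s := Real.sqrt (2*γ) with hs_def
    have hspos : 0 < s := lt_of_lt_of_le hs0 hsle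
    have hA : |1 / Real.cosh ((γ + s * z) / 2) ^ 2| ≤ 1 := by
      rw [abs_of_nonneg (by positivity), div_le_one (by positivity)]
      nlinarith [Real.one_le_cosh ((γ + s * z) / 2)]
    have hB : |(1 + 1/s * z) / 2| ≤ 1 + |z| / Real.sqrt γ₀ := by
      have h1 : |1 + 1/s * z| ≤ 1 + |z| / s := by
        calc |1 + 1/s * z| ≤ |1| + |1/s * z| := abs_add_le _ _
          _ = 1 + |z| / s := by
              rw [abs_one, abs_mul, abs_of_nonneg (by positivity : (0:ℝ) ≤ 1/s)]
              ring
      have h2 : |z| / s ≤ |z| / Real.sqrt γ₀ :=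
        div_le_div_of_nonneg_left (abs_nonneg z) hs0 hsle
      calc |(1 + 1/s * z) / 2| = |1 + 1/s * z| / 2 := by
            rw [abs_div, abs_of_pos (by norm_num : (0:ℝ) < 2)]
        _ ≤ (1 + |z| / s) / 2 := by linarith
        _ ≤ 1 + |z| / Real.sqrt γ₀ := by
            have := abs_nonneg z
            have h3 : 0 ≤ |z| / Real.sqrt γ₀ := by positivity
            linarith
    calc ‖1 / Real.cosh ((γ + s * z) / 2) ^ 2 * ((1 + 1/s * z) / 2) * stdg z‖
        = |1 / Real.cosh ((γ + s * z) / 2) ^ 2| * |(1 + 1/s * z) / 2| * stdg z := by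
          rw [Real.norm_eq_abs, abs_mul, abs_mul, abs_of_nonneg (stdg_nonneg z)]
      _ ≤ 1 * (1 + |z| / Real.sqrt γ₀) * stdg z := by
          apply mul_le_mul_of_nonneg_right _ (stdg_nonneg z)
          exact mul_le_mul hA hB (abs_nonneg _) zero_le_one
      _ = (1 + |z| / Real.sqrt γ₀) * stdg z := by ring
  · apply (integrable_stdg.add (integrable_abs_mul_stdg.const_mul (Real.sqrt γ₀)⁻¹)).congr
    filter_upwards with z
    show stdg z + (Real.sqrt γ₀)⁻¹ * (|z| * stdg z) = (1 + |z| / Real.sqrt γ₀) * stdg z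
    field_simp
  · filter_upwards with z
    intro γ hγ
    rw [Metric.mem_ball, Real.dist_eq] at hγ
    have hγ1 : γ₀/2 < γ := by cases abs_lt.mp hγ; linarith
    have hγpos : 0 < γ := by linarith
    have hw : HasDerivAt (fun γ : ℝ => (γ + Real.sqrt (2*γ) * z) / 2)
        ((1 + 1 / Real.sqrt (2*γ) * z) / 2) γ :=
      ((hasDerivAt_id γ).add ((hasDerivAt_sqrt_two_mul hγpos).mul_const z)).div_const 2
    exact ((myTanh_hasDerivAt _).comp γ hw).mul_const (stdg z)

lemma Dint_pos {γ : ℝ} (h : 0 < γ) : 0 < Dint γ := by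
  have h2γ : (0:ℝ) < 2 * γ := by linarith
  have hs : (0:ℝ) < Real.sqrt (2*γ) := Real.sqrt_pos.mpr h2γ
  set s := Real.sqrt (2*γ) with hs_def
  have contw : Continuous fun z : ℝ => (γ + s * z) / 2 := by continuity
  have coshne : ∀ z : ℝ, Real.cosh ((γ + s * z) / 2) ^ 2 ≠ 0 :=
    fun z => by positivity
  have c2 : Continuous fun z : ℝ => 1 / Real.cosh ((γ + s * z) / 2) ^ 2 :=
    continuous_const.div ((Real.continuous_cosh.comp contw).pow 2) coshne
  have hc2bd : ∀ z : ℝ, |1 / Real.cosh ((γ + s * z) / 2) ^ 2| ≤ 1 := by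
    intro z
    rw [abs_of_nonneg (by positivity), div_le_one (by positivity)]
    nlinarith [Real.one_le_cosh ((γ + s * z) / 2)]
  -- integration by parts
  have hder : ∀ z : ℝ, HasDerivAt (fun z => 1 / Real.cosh ((γ + s * z) / 2) ^ 2 * stdg z)
      ((-(s * Real.tanh ((γ + s * z) / 2)) - z) * (1 / Real.cosh ((γ + s * z) / 2) ^ 2)
        * stdg z) z := by
    intro z
    have hw : HasDerivAt (fun z : ℝ => (γ + s * z) / 2) (s * 1 / 2) z :=
      (((hasDerivAt_id z).const_mul s).const_add γ).div_const 2
    have hcosh2 := ((Real.hasDerivAt_cosh _).comp z hw).pow 2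
    have hinv := ((hasDerivAt_const z (1:ℝ)).div hcosh2 (coshne z))
    have hmul := hinv.mul (hasDerivAt_stdg z)
    refine hmul.congr_deriv ?_
    have hc := Real.cosh_pos ((γ + s * z) / 2)
    rw [Real.tanh_eq_sinh_div_cosh]
    simp only [Function.comp_apply, Pi.div_apply, Pi.pow_apply]
    field_simp
    ring
  have int_f : Integrable (fun z => 1 / Real.cosh ((γ + s * z) / 2) ^ 2 * stdg z) :=
    integrable_bdd_stdg c2 hc2bd
  have int_E : Integrable (fun z =>
      (-(s * Real.tanh ((γ + s * z) / 2)) - z) * (1 / Real.cosh ((γ + s * z) / 2) ^ 2)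
        * stdg z) := by
    apply Integrable.mono'
      (((integrable_stdg.const_mul s).add integrable_abs_mul_stdg).congr
        (ae_of_all _ fun z => rfl))
      (((((continuous_const.mul (myTanh_cont.comp contw)).neg.sub continuous_id)).mul c2).mul
        continuous_stdg).aestronglyMeasurable
    filter_upwards with z
    rw [Real.norm_eq_abs, Pi.mul_apply, abs_mul, abs_of_nonneg (stdg_nonneg z), Pi.mul_apply, abs_mul]
    have h1 : |(-(s * Real.tanh ((γ + s * z) / 2)) - z)| ≤ s + |z| := by
      calc |(-(s * Real.tanh ((γ + s * z) / 2)) - z)|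
          ≤ |(-(s * Real.tanh ((γ + s * z) / 2)))| + |z| := abs_sub _ _
        _ ≤ s + |z| := by
            rw [abs_neg, abs_mul, abs_of_pos hs]
            have := myTanh_abs_le_one ((γ + s * z) / 2)
            nlinarith
    calc |(-(s * Real.tanh ((γ + s * z) / 2)) - z)| * |1 / Real.cosh ((γ + s * z) / 2) ^ 2|
          * stdg z
        ≤ (s + |z|) * 1 * stdg z := by
          apply mul_le_mul_of_nonneg_right _ (stdg_nonneg z)
          exact mul_le_mul h1 (hc2bd z) (abs_nonneg _) (by positivity)
      _ = s * stdg z + |z| * stdg z := by ring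
  have hzero := integral_eq_zero_of_hasDerivAt_of_integrable hder int_E int_f
  -- split the zero integral
  have int3 : Integrable (fun z => Real.tanh ((γ + s * z) / 2)
      * (1 / Real.cosh ((γ + s * z) / 2) ^ 2) * stdg z) := by
    apply integrable_bdd_stdg ((myTanh_cont.comp contw).mul c2) (C := 1)
    intro z
    rw [Pi.mul_apply, abs_mul]
    calc |Real.tanh ((γ + s * z) / 2)| * |1 / Real.cosh ((γ + s * z) / 2) ^ 2|
        ≤ 1 * 1 := mul_le_mul (myTanh_abs_le_one _) (hc2bd z) (abs_nonneg _) zero_le_one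
      _ = 1 := one_mul 1
  have int2 : Integrable (fun z => z * (1 / Real.cosh ((γ + s * z) / 2) ^ 2) * stdg z) := by
    apply Integrable.mono' (integrable_abs_mul_stdg)
      (((continuous_id.mul c2).mul continuous_stdg).aestronglyMeasurable)
    filter_upwards with z
    rw [Real.norm_eq_abs, Pi.mul_apply, abs_mul, abs_of_nonneg (stdg_nonneg z), Pi.mul_apply, abs_mul]
    apply mul_le_mul_of_nonneg_right _ (stdg_nonneg z)
    calc |z| * |1 / Real.cosh ((γ + s * z) / 2) ^ 2| ≤ |z| * 1 :=
          mul_le_mul_of_nonneg_left (hc2bd z) (abs_nonneg z)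
      _ = |z| := mul_one _
  have hsplit : ∫ z : ℝ, (-(s * Real.tanh ((γ + s * z) / 2)) - z)
      * (1 / Real.cosh ((γ + s * z) / 2) ^ 2) * stdg z
      = -s * (∫ z : ℝ, Real.tanh ((γ + s * z) / 2) * (1 / Real.cosh ((γ + s * z) / 2) ^ 2)
        * stdg z) - ∫ z : ℝ, z * (1 / Real.cosh ((γ + s * z) / 2) ^ 2) * stdg z := by
    rw [← integral_const_mul, ← integral_sub ((int3.const_mul (-s)).congr
      (ae_of_all _ fun z => rfl)) int2]
    congr 1; funext z; ring
  rw [hsplit] at hzero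
  have hI2 : ∫ z : ℝ, z * (1 / Real.cosh ((γ + s * z) / 2) ^ 2) * stdg z
      = -s * ∫ z : ℝ, Real.tanh ((γ + s * z) / 2) * (1 / Real.cosh ((γ + s * z) / 2) ^ 2)
        * stdg z := by linarith
  -- rewrite Dint
  have hDint : Dint γ = (1/2) * ((∫ z : ℝ, 1 / Real.cosh ((γ + s * z) / 2) ^ 2 * stdg z)
      - ∫ z : ℝ, Real.tanh ((γ + s * z) / 2) * (1 / Real.cosh ((γ + s * z) / 2) ^ 2)
        * stdg z) := by
    unfold Dint
    rw [← hs_def]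
    have hsplit2 : ∀ z : ℝ, 1 / Real.cosh ((γ + s * z) / 2) ^ 2 * ((1 + 1 / s * z) / 2)
        * stdg z
        = (1/2) * (1 / Real.cosh ((γ + s * z) / 2) ^ 2 * stdg z)
          + (1/(2*s)) * (z * (1 / Real.cosh ((γ + s * z) / 2) ^ 2) * stdg z) := by
      intro z; field_simp
    rw [show (∫ z : ℝ, 1 / Real.cosh ((γ + s * z) / 2) ^ 2 * ((1 + 1 / s * z) / 2) * stdg z)
        = ∫ z : ℝ, ((1/2) * (1 / Real.cosh ((γ + s * z) / 2) ^ 2 * stdg z)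
          + (1/(2*s)) * (z * (1 / Real.cosh ((γ + s * z) / 2) ^ 2) * stdg z)) by
      congr 1; funext z; exact hsplit2 z]
    rw [integral_add (int_f.const_mul _) (int2.const_mul _), integral_const_mul,
      integral_const_mul, hI2]
    field_simp
    ring
  rw [hDint]
  have hpos : 0 < ∫ z : ℝ, ((1 - Real.tanh ((γ + s * z) / 2))
      * (1 / Real.cosh ((γ + s * z) / 2) ^ 2)) * stdg z := by
    apply integral_stdg_pos (g := fun z => (1 - Real.tanh ((γ + s * z) / 2))
      * (1 / Real.cosh ((γ + s * z) / 2) ^ 2))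
      ((continuous_const.sub (myTanh_cont.comp contw)).mul c2)
    · intro z
      have h1 := myTanh_lt_one ((γ + s * z) / 2)
      have h2 : 0 < 1 / Real.cosh ((γ + s * z) / 2) ^ 2 := by positivity
      nlinarith
    · apply integrable_bdd_stdg ((continuous_const.sub (myTanh_cont.comp contw)).mul c2)
        (C := 2)
      intro z
      rw [Pi.mul_apply, abs_mul]
      have h1 : |1 - Real.tanh ((γ + s * z) / 2)| ≤ 2 := by
        have := myTanh_abs_le_one ((γ + s * z) / 2)
        rw [abs_le] at this ⊢
        constructor <;> [linarith [this.2]; linarith [this.1]]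
      calc |1 - Real.tanh ((γ + s * z) / 2)| * |1 / Real.cosh ((γ + s * z) / 2) ^ 2|
          ≤ 2 * 1 := mul_le_mul h1 (hc2bd z) (abs_nonneg _) (by norm_num)
        _ = 2 := by norm_num
  have heq : (∫ z : ℝ, 1 / Real.cosh ((γ + s * z) / 2) ^ 2 * stdg z)
      - (∫ z : ℝ, Real.tanh ((γ + s * z) / 2) * (1 / Real.cosh ((γ + s * z) / 2) ^ 2)
        * stdg z)
      = ∫ z : ℝ, ((1 - Real.tanh ((γ + s * z) / 2))
        * (1 / Real.cosh ((γ + s * z) / 2) ^ 2)) * stdg z := by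
    rw [← integral_sub int_f int3]
    congr 1; funext z; ring
  rw [heq]
  linarith

theorem psi_strictMono_bounds_limits :
    StrictMonoOn psi (Set.Ioi 0) ∧
    (∀ γ : ℝ, 0 < γ → 0 < psi γ ∧ psi γ < 1) ∧
    Tendsto psi (nhdsWithin 0 (Set.Ioi 0)) (nhds 0) ∧
    Tendsto psi atTop (nhds 1) := by
  refine ⟨?_, ?_, ?_, ?_⟩
  · have hZ : StrictMonoOn psiZ (Set.Ioi 0) := by
      apply strictMonoOn_of_deriv_pos (convex_Ioi 0)
      · intro γ hγ
        exact (psiZ_hasDerivAt hγ).continuousAt.continuousWithinAt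
      · intro γ hγ
        rw [interior_Ioi] at hγ
        rw [(psiZ_hasDerivAt hγ).deriv]
        exact Dint_pos hγ
    intro a ha b hb hab
    rw [Set.mem_Ioi] at ha hb
    have := hZ (Set.mem_Ioi.mpr ha) (Set.mem_Ioi.mpr hb) hab
    rw [psi_eq ha, psi_eq hb]
    exact this
  · intro γ hγ
    exact ⟨(psi_bounds hγ).1, by linarith [(one_sub_psi_bounds hγ).1]⟩
  · apply squeeze_zero'
    · filter_upwards [self_mem_nhdsWithin] with γ hγ
      exact (psi_bounds hγ).1.le
    · filter_upwards [self_mem_nhdsWithin] with γ hγ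
      exact (psi_bounds hγ).2
    · have h := ((continuous_id.div_const 2).tendsto (0:ℝ)).mono_left
        (nhdsWithin_le_nhds (s := Set.Ioi (0:ℝ)))
      simpa using h
  · have h1 : Tendsto (fun γ => 1 - psi γ) atTop (nhds 0) := by
      apply squeeze_zero'
      · filter_upwards [eventually_gt_atTop 0] with γ hγ
        exact (one_sub_psi_bounds hγ).1.le
      · filter_upwards [eventually_gt_atTop 0] with γ hγ
        exact (one_sub_psi_bounds hγ).2
      · have h2 : Tendsto (fun γ : ℝ => γ / 4) atTop atTop :=
          tendsto_id.atTop_div_const (by norm_num)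
        have h3 := Real.tendsto_exp_neg_atTop_nhds_zero.comp h2
        have h4 : (fun γ : ℝ => Real.exp (-(γ/4))) = fun γ : ℝ => Real.exp (-γ/4) := by
          funext γ; rw [neg_div]
        rw [show ((fun x => Real.exp (-x)) ∘ fun γ : ℝ => γ / 4)
          = fun γ : ℝ => Real.exp (-(γ/4)) from rfl, h4] at h3
        exact h3
    have h2 := (tendsto_const_nhds (x := (1:ℝ)) (f := atTop)).sub h1
    simp only [sub_zero] at h2
    apply h2.congr
    intro γ; ring
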